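/- arXiv:1307.1850 — 2 statements merged into one kernel-verified Lean document; each statement's English description precedes it below -/
import Mathlib

section
/- A Polish space X is Kσ (a countable union of compact sets) if and only if there is no closed subset of X homeomorphic to Baire space ℕ^ℕ; equivalently (Hurewicz): if X is Polish and not Kσ, then X contains a closed subset homeomorphic to ℕ^ℕ. -/
open Set Metric Filter Topology TopologicalSpace

section helpers

variable {X : Type*} [MetricSpace X]

lemma exists_infinite_fiber_of_finite_range {α : Type*} {k : ℕ → α}
    (h : (Set.range k).Finite) : ∃ a, {j | k j = a}.Infinite := by
  by_contra hc
  push_neg at hc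
  have hsub : (Set.univ : Set ℕ) ⊆ ⋃ a ∈ Set.range k, {j | k j = a} := fun j _ =>
    Set.mem_biUnion (Set.mem_range_self j) rfl
  exact Set.infinite_univ ((h.biUnion fun a _ => hc a).subset hsub)

lemma exists_strictMono_injective_comp {α : Type*} (k : ℕ → α)
    (h : (Set.range k).Infinite) :
    ∃ φ : ℕ → ℕ, StrictMono φ ∧ Function.Injective (k ∘ φ) := by
  have key : ∀ M : ℕ, ∃ m, k m ∉ k '' Set.Iic M := by
    intro M
    obtain ⟨a, ⟨m, rfl⟩, ha⟩ := h.exists_notMem_finite ((Set.finite_Iic M).image k)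
    exact ⟨m, ha⟩
  choose next hnext using key
  set φ : ℕ → ℕ := fun j => Nat.rec 0 (fun _ p => next p) j with hφ
  have hsucc : ∀ j, φ (j + 1) = next (φ j) := fun j => rfl
  have hlt : ∀ j, φ j < φ (j + 1) := by
    intro j
    by_contra hle
    push_neg at hle
    rw [hsucc j] at hle
    exact hnext (φ j) ⟨next (φ j), hle, rfl⟩
  have hmono : StrictMono φ := strictMono_nat_of_lt_succ hlt
  have hne : ∀ i j, i < j → k (φ j) ≠ k (φ i) := by
    intro i j hij
    obtain ⟨j', rfl⟩ := Nat.exists_eq_add_of_lt hij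
    have : φ i ≤ φ (i + j') := hmono.monotone (Nat.le_add_right _ _)
    intro heq
    exact hnext (φ (i + j')) ⟨φ i, this, heq.symm⟩
  refine ⟨φ, hmono, fun a b hab => ?_⟩
  rcases lt_trichotomy a b with h' | h' | h'
  · exact absurd hab.symm (hne a b h')
  · exact h'
  · exact absurd hab (hne b a h')

lemma isClosed_image_of_no_clusterPt {x : ℕ → X}
    (hx : ∀ z : X, ¬ MapClusterPt z atTop x) (T : Set ℕ) :
    IsClosed (x '' T) := by
  refine isClosed_of_closure_subset fun z hz => ?_
  obtain ⟨y, hyT, hyz⟩ := mem_closure_iff_seq_limit.mp hz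
  choose k hkT hky using hyT
  by_cases hfin : (Set.range k).Finite
  · obtain ⟨a, ha⟩ := exists_infinite_fiber_of_finite_range hfin
    have hfreq : ∃ᶠ j in atTop, y j ∈ ({x a} : Set X) := by
      have : ∃ᶠ j in atTop, k j = a := Nat.frequently_atTop_iff_infinite.mpr ha
      exact this.mono fun j hj => by rw [← hky j, hj]; exact Set.mem_singleton _
    have hz' : z ∈ closure ({x a} : Set X) :=
      mem_closure_of_frequently_of_tendsto hfreq hyz
    rw [closure_singleton] at hz'
    obtain ⟨j, hj⟩ := ha.nonempty
    exact ⟨a, by rw [← hj]; exact hkT j, hz'.symm⟩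
  · obtain ⟨φ, hφ, hinj⟩ := exists_strictMono_injective_comp k hfin
    have hg : Tendsto (k ∘ φ) atTop atTop := Function.Injective.nat_tendsto_atTop hinj
    have : Tendsto (x ∘ (k ∘ φ)) atTop (𝓝 z) := by
      have : x ∘ (k ∘ φ) = y ∘ φ := by
        funext j; simp only [Function.comp_apply, hky]
      rw [this]
      exact hyz.comp hφ.tendsto_atTop
    exact absurd (this.mapClusterPt.of_comp hg) (hx z)

lemma isCompact_closure_of_clusterPt {s : Set X}
    (h : ∀ x : ℕ → X, (∀ n, x n ∈ s) → ∃ z : X, MapClusterPt z atTop x) :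
    IsCompact (closure s) := by
  rcases Set.eq_empty_or_nonempty s with rfl | hne
  · simp
  refine IsSeqCompact.isCompact fun y hy => ?_
  have : ∀ n : ℕ, ∃ u ∈ s, dist (y n) u < 1 / (n + 1) := fun n =>
    Metric.mem_closure_iff.mp (hy n) _ (by positivity)
  choose u hus hud using this
  obtain ⟨z, hz⟩ := h u hus
  obtain ⟨φ, hφ, hφt⟩ := TopologicalSpace.FirstCountableTopology.tendsto_subseq hz
  have hzs : z ∈ closure s :=
    mem_closure_of_tendsto hφt (Filter.Eventually.of_forall fun j => hus (φ j))
  refine ⟨z, hzs, φ, hφ, ?_⟩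
  rw [tendsto_iff_dist_tendsto_zero]
  have hd : Tendsto (fun j => dist (u (φ j)) z) atTop (𝓝 0) :=
    tendsto_iff_dist_tendsto_zero.mp hφt
  have he : Tendsto (fun j : ℕ => 1 / ((j : ℝ) + 1)) atTop (𝓝 0) :=
    tendsto_one_div_add_atTop_nhds_zero_nat
  have h2 : Tendsto (fun j => dist (y (φ j)) (u (φ j))) atTop (𝓝 0) := by
    refine squeeze_zero (fun j => dist_nonneg) (fun j => ?_) he
    refine (le_of_lt (hud (φ j))).trans ?_
    have : (j : ℝ) + 1 ≤ (φ j : ℝ) + 1 := by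
      have h3 : j ≤ φ j := hφ.le_apply
      have := (Nat.cast_le (α := ℝ)).mpr h3
      linarith
    exact one_div_le_one_div_of_le (by positivity) this
  have h1 : Tendsto (fun j => dist (y (φ j)) (u (φ j)) + dist (u (φ j)) z) atTop (𝓝 0) := by
    simpa using h2.add hd
  exact squeeze_zero (fun j => dist_nonneg) (fun j => dist_triangle _ _ _) h1

end helpers

section part2
variable {X : Type*} [MetricSpace X]

lemma exists_escape_seq {s : Set X}
    (hF : ∃ F : ℕ → Set X, (∀ n, IsClosed (F n)) ∧ (⋃ n, F n) = s)
    (hs : ¬ IsSigmaCompact s) :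
    ∃ x : ℕ → X, (∀ n, x n ∈ s) ∧ Function.Injective x ∧
      ∀ z : X, ¬ MapClusterPt z atTop x := by
  obtain ⟨F, hFc, hFu⟩ := hF
  -- Step 1: a sequence with no cluster point
  have h1 : ∃ x : ℕ → X, (∀ n, x n ∈ s) ∧ ∀ z, ¬ MapClusterPt z atTop x := by
    by_contra hcon
    push_neg at hcon
    have hcl : IsCompact (closure s) := by
      refine isCompact_closure_of_clusterPt fun x hx => ?_
      obtain ⟨z, hz⟩ := hcon x hx
      exact ⟨z, hz⟩
    refine hs ?_
    have : s = ⋃ n, F n ∩ closure s := by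
      rw [← Set.iUnion_inter, hFu]
      exact (Set.inter_eq_left.mpr subset_closure).symm
    rw [this]
    exact isSigmaCompact_iUnion_of_isCompact _ fun n => hcl.inter_left (hFc n)
  obtain ⟨x₀, hx₀s, hx₀⟩ := h1
  -- Step 2: range is infinite
  have hinf : (Set.range x₀).Infinite := by
    intro hfin
    obtain ⟨a, ha⟩ := exists_infinite_fiber_of_finite_range hfin
    have hemb := ha.natEmbedding
    have hginj : Function.Injective fun j => (hemb j : ℕ) :=
      fun a b hab => hemb.injective (Subtype.ext hab)
    have hg : Tendsto (fun j => (hemb j : ℕ)) atTop atTop :=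
      Function.Injective.nat_tendsto_atTop hginj
    have hconst : (x₀ ∘ fun j => (hemb j : ℕ)) = fun _ => a := by
      funext j
      exact (hemb j).2
    have : MapClusterPt a atTop x₀ := by
      refine Filter.Tendsto.mapClusterPt ?_ |>.of_comp hg
      rw [hconst]
      exact tendsto_const_nhds
    exact hx₀ _ this
  -- Step 3: extract an injective subsequence
  obtain ⟨φ, hφ, hinj⟩ := exists_strictMono_injective_comp x₀ hinf
  refine ⟨x₀ ∘ φ, fun n => hx₀s _, hinj, fun z hz => ?_⟩
  exact hx₀ z (hz.of_comp hφ.tendsto_atTop)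

lemma isFsigma_open {U : Set X} (hU : IsOpen U) :
    ∃ F : ℕ → Set X, (∀ n, IsClosed (F n)) ∧ (⋃ n, F n) = U := by
  rcases Set.eq_empty_or_nonempty Uᶜ with hc | hc
  · have hUuniv : U = Set.univ := Set.compl_empty_iff.mp hc
    exact ⟨fun _ => U, fun _ => hUuniv ▸ isClosed_univ, by rw [Set.iUnion_const]⟩
  · refine ⟨fun n => {y | 1 / (n + 1) ≤ infDist y Uᶜ}, fun n => ?_, ?_⟩
    · exact isClosed_le continuous_const (continuous_infDist_pt _)
    · apply Set.Subset.antisymm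
      · intro y hy
        rw [Set.mem_iUnion] at hy
        obtain ⟨n, hn⟩ := hy
        simp only [Set.mem_setOf_eq] at hn
        by_contra hyU
        have : infDist y Uᶜ = 0 := infDist_zero_of_mem hyU
        rw [this] at hn
        have : (0:ℝ) < 1 / (n + 1) := by positivity
        linarith
      · intro y hy
        have hpos : 0 < infDist y Uᶜ :=
          (hU.isClosed_compl.notMem_iff_infDist_pos hc).mp (by simpa using hy)
        obtain ⟨n, hn⟩ := exists_nat_one_div_lt hpos
        exact Set.mem_iUnion.mpr ⟨n, le_of_lt hn⟩

end part2

section part3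
variable {X : Type*} [MetricSpace X]

/-- A good family of disjoint closed balls inside `U` centered in `W`,
    such that every compact set meets only finitely many of them. -/
def GoodFam (W U : Set X) (ε : ℝ) (f : ℕ → X × ℝ) : Prop :=
  (∀ n, (f n).1 ∈ U ∩ W) ∧ (∀ n, 0 < (f n).2) ∧ (∀ n, (f n).2 ≤ ε) ∧
  (∀ n, closedBall (f n).1 (f n).2 ⊆ U) ∧
  (∀ m n, m ≠ n → Disjoint (closedBall (f m).1 (f m).2) (closedBall (f n).1 (f n).2)) ∧
  (∀ K : Set X, IsCompact K → {n | (closedBall (f n).1 (f n).2 ∩ K).Nonempty}.Finite)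

lemma exists_goodFam (W : Set X)
    (hP : ∀ U, IsOpen U → (U ∩ W).Nonempty → ¬ IsSigmaCompact (U ∩ W))
    (hWc : IsClosed W)
    {U : Set X} (hU : IsOpen U) (hne : (U ∩ W).Nonempty) {ε : ℝ} (hε : 0 < ε) :
    ∃ f : ℕ → X × ℝ, GoodFam W U ε f := by
  have hFσ : ∃ F : ℕ → Set X, (∀ n, IsClosed (F n)) ∧ (⋃ n, F n) = U ∩ W := by
    obtain ⟨F, hFc, hFu⟩ := isFsigma_open hU
    exact ⟨fun n => F n ∩ W, fun n => (hFc n).inter hWc, by rw [← Set.iUnion_inter, hFu]⟩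
  obtain ⟨x, hxs, hxinj, hxcl⟩ := exists_escape_seq hFσ (hP U hU hne)
  -- distances to the other points
  set d : ℕ → ℝ := fun n => infDist (x n) (x '' {n}ᶜ) with hd
  have hdpos : ∀ n, 0 < d n := by
    intro n
    have hcl : IsClosed (x '' {n}ᶜ) := isClosed_image_of_no_clusterPt hxcl _
    have hnem : (x '' {n}ᶜ).Nonempty := ⟨x (n + 1), ⟨n + 1, by simp, rfl⟩⟩
    refine (hcl.notMem_iff_infDist_pos hnem).mp ?_
    rintro ⟨m, hm, hmx⟩
    exact hm (hxinj hmx)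
  have hdle : ∀ m n, m ≠ n → d m ≤ dist (x m) (x n) := by
    intro m n hmn
    exact infDist_le_dist_of_mem ⟨n, fun h => hmn (h.symm ▸ rfl), rfl⟩
  -- safety distance to the complement of U
  have hρ : ∀ n, ∃ ρ : ℝ, 0 < ρ ∧ ∀ y, dist y (x n) ≤ ρ → y ∈ U := by
    intro n
    rcases Set.eq_empty_or_nonempty Uᶜ with hc | hc
    · exact ⟨1, one_pos, fun y _ => by
        have : U = Set.univ := Set.compl_empty_iff.mp hc
        simp [this]⟩
    · have hxU : x n ∈ U := (hxs n).1
      have hpos : 0 < infDist (x n) Uᶜ :=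
        (hU.isClosed_compl.notMem_iff_infDist_pos hc).mp (by simpa using hxU)
      refine ⟨infDist (x n) Uᶜ / 2, by positivity, fun y hy => ?_⟩
      by_contra hyU
      have h1 : infDist (x n) Uᶜ ≤ dist (x n) y := infDist_le_dist_of_mem hyU
      rw [dist_comm] at h1
      linarith
  choose ρ hρpos hρsub using hρ
  set r : ℕ → ℝ := fun n => min (min ε ((1 / 2 : ℝ) ^ n)) (min (d n / 3) (ρ n)) with hr
  have hrpos : ∀ n, 0 < r n := by
    intro n
    have := hdpos n
    have := hρpos n
    have : (0:ℝ) < (1/2:ℝ)^n := by positivity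
    simp only [hr, lt_min_iff]
    refine ⟨⟨hε, this⟩, ⟨by linarith [hdpos n], hρpos n⟩⟩
  refine ⟨fun n => (x n, r n), hxs, hrpos, fun n => (min_le_left _ _).trans (min_le_left _ _),
    fun n => ?_, fun m n hmn => ?_, fun K hK => ?_⟩
  · -- closedBall ⊆ U
    intro y hy
    refine hρsub n y (le_trans (mem_closedBall.mp hy) ?_)
    exact (min_le_right _ _).trans (min_le_right _ _)
  · -- disjointness
    rw [Set.disjoint_left]
    intro y hym hyn
    have h1 : dist (x m) (x n) ≤ r m + r n :=
      dist_triangle (x m) y (x n) |>.trans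
        (add_le_add (dist_comm y (x m) ▸ mem_closedBall.mp hym) (mem_closedBall.mp hyn))
    have h2 : r m ≤ d m / 3 := (min_le_right _ _).trans (min_le_left _ _)
    have h3 : r n ≤ d n / 3 := (min_le_right _ _).trans (min_le_left _ _)
    have h4 := hdle m n hmn
    have h5 := hdle n m (Ne.symm hmn)
    rw [dist_comm (x n) (x m)] at h5
    have h6 := hdpos m
    linarith
  · -- compact finiteness
    by_contra hSfin
    have hSinf : {n | (closedBall (x n) (r n) ∩ K).Nonempty}.Infinite := hSfin
    set hemb := hSinf.natEmbedding with hembdef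
    have hη : ∀ j, (closedBall (x (hemb j : ℕ)) (r (hemb j : ℕ)) ∩ K).Nonempty :=
      fun j => (hemb j).2
    choose y hyb hyK using hη
    obtain ⟨z, hzK, ψ, hψ, hψt⟩ := hK.tendsto_subseq hyK
    have hginj : Function.Injective fun j => (hemb (ψ j) : ℕ) := by
      intro a b hab
      exact hψ.injective (hemb.injective (Subtype.ext hab))
    have hg : Tendsto (fun j => (hemb (ψ j) : ℕ)) atTop atTop :=
      Function.Injective.nat_tendsto_atTop hginj
    have hxz : Tendsto (x ∘ fun j => (hemb (ψ j) : ℕ)) atTop (𝓝 z) := by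
      rw [tendsto_iff_dist_tendsto_zero]
      have hb1 : Tendsto (fun j => ((1:ℝ)/2) ^ (hemb (ψ j) : ℕ)) atTop (𝓝 0) :=
        (tendsto_pow_atTop_nhds_zero_of_lt_one (by norm_num) (by norm_num)).comp hg
      have hb2 : Tendsto (fun j => dist (y (ψ j)) z) atTop (𝓝 0) :=
        tendsto_iff_dist_tendsto_zero.mp hψt
      have hb : Tendsto (fun j => ((1:ℝ)/2) ^ (hemb (ψ j) : ℕ) + dist (y (ψ j)) z)
          atTop (𝓝 0) := by simpa using hb1.add hb2
      refine squeeze_zero (fun j => dist_nonneg) (fun j => ?_) hb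
      have h1 : dist (x (hemb (ψ j) : ℕ)) (y (ψ j)) ≤ r (hemb (ψ j) : ℕ) := by
        have := hyb (ψ j)
        rw [mem_closedBall, dist_comm] at this
        exact this
      have h2 : r (hemb (ψ j) : ℕ) ≤ ((1:ℝ)/2) ^ (hemb (ψ j) : ℕ) :=
        (min_le_left _ _).trans (min_le_right _ _)
      calc dist ((x ∘ fun j => (hemb (ψ j) : ℕ)) j) z
          ≤ dist (x (hemb (ψ j) : ℕ)) (y (ψ j)) + dist (y (ψ j)) z := dist_triangle _ _ _
        _ ≤ ((1:ℝ)/2) ^ (hemb (ψ j) : ℕ) + dist (y (ψ j)) z := by linarith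
    exact hxcl z (hxz.mapClusterPt.of_comp hg)

end part3

section part4
variable {X : Type*} [MetricSpace X]

variable (W : Set X)

open scoped Classical in
noncomputable def schemeStep
    (hP : ∀ U, IsOpen U → (U ∩ W).Nonempty → ¬ IsSigmaCompact (U ∩ W))
    (hWc : IsClosed W) : X × ℝ → ℕ → X × ℝ := fun p =>
  if h : p.1 ∈ W ∧ 0 < p.2 then
    (exists_goodFam W hP hWc (isOpen_ball : IsOpen (ball p.1 p.2))
      ⟨p.1, mem_ball_self h.2, h.1⟩ (half_pos h.2)).choose
  else fun _ => p

noncomputable def scheme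
    (hP : ∀ U, IsOpen U → (U ∩ W).Nonempty → ¬ IsSigmaCompact (U ∩ W))
    (hWc : IsClosed W) (p0 : X × ℝ) : List ℕ → X × ℝ
  | [] => p0
  | a :: s => schemeStep W hP hWc (scheme hP hWc p0 s) a

variable {W}
variable (hP : ∀ U, IsOpen U → (U ∩ W).Nonempty → ¬ IsSigmaCompact (U ∩ W))
    (hWc : IsClosed W) {p0 : X × ℝ}

lemma scheme_mem (hp0 : p0.1 ∈ W ∧ 0 < p0.2) : ∀ s : List ℕ,
    (scheme W hP hWc p0 s).1 ∈ W ∧ 0 < (scheme W hP hWc p0 s).2 := by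
  intro s
  induction s with
  | nil => exact hp0
  | cons a s ih =>
    show (schemeStep W hP hWc (scheme W hP hWc p0 s) a).1 ∈ W ∧
      0 < (schemeStep W hP hWc (scheme W hP hWc p0 s) a).2
    rw [schemeStep, dif_pos ih]
    set q := scheme W hP hWc p0 s
    have hspec := (exists_goodFam W hP hWc (isOpen_ball : IsOpen (ball q.1 q.2))
      ⟨q.1, mem_ball_self ih.2, ih.1⟩ (half_pos ih.2)).choose_spec
    exact ⟨(hspec.1 a).2, hspec.2.1 a⟩

lemma scheme_good (hp0 : p0.1 ∈ W ∧ 0 < p0.2) (s : List ℕ) :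
    GoodFam W (ball (scheme W hP hWc p0 s).1 (scheme W hP hWc p0 s).2)
      ((scheme W hP hWc p0 s).2 / 2) (fun n => scheme W hP hWc p0 (n :: s)) := by
  have ih := scheme_mem hP hWc hp0 s
  have : (fun n => scheme W hP hWc p0 (n :: s)) =
      (exists_goodFam W hP hWc
        (isOpen_ball : IsOpen (ball (scheme W hP hWc p0 s).1 (scheme W hP hWc p0 s).2))
        ⟨(scheme W hP hWc p0 s).1, mem_ball_self ih.2, ih.1⟩ (half_pos ih.2)).choose := by
    funext n
    show schemeStep W hP hWc (scheme W hP hWc p0 s) n = _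
    rw [schemeStep, dif_pos ih]
  rw [this]
  exact (exists_goodFam W hP hWc (isOpen_ball :
      IsOpen (ball (scheme W hP hWc p0 s).1 (scheme W hP hWc p0 s).2))
    ⟨(scheme W hP hWc p0 s).1, mem_ball_self ih.2, ih.1⟩ (half_pos ih.2)).choose_spec

end part4

section part5
variable {X : Type*} [MetricSpace X] [CompleteSpace X]

theorem scheme_to_baire (c : List ℕ → X) (r : List ℕ → ℝ)
    (h1 : ∀ s, 0 < r s)
    (h2 : ∀ s n, closedBall (c (n :: s)) (r (n :: s)) ⊆ ball (c s) (r s))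
    (h3 : ∀ s n, r (n :: s) ≤ r s / 2)
    (h4 : ∀ (s : List ℕ) m n, m ≠ n →
      Disjoint (closedBall (c (m :: s)) (r (m :: s))) (closedBall (c (n :: s)) (r (n :: s))))
    (h5 : ∀ (s : List ℕ) (K : Set X), IsCompact K →
      {n : ℕ | (closedBall (c (n :: s)) (r (n :: s)) ∩ K).Nonempty}.Finite)
    (h6 : r [] ≤ 1) :
    ∃ C : Set X, IsClosed C ∧ Nonempty (C ≃ₜ (ℕ → ℕ)) := by
  classical
  set cB : List ℕ → Set X := fun s => closedBall (c s) (r s) with hcB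
  -- radii bound
  have rb : ∀ s : List ℕ, r s ≤ (1 / 2 : ℝ) ^ s.length := by
    intro s
    induction s with
    | nil => simpa using h6
    | cons a s ih =>
      have := h3 s a
      simp only [List.length_cons, pow_succ]
      calc r (a :: s) ≤ r s / 2 := h3 s a
        _ ≤ (1/2:ℝ)^s.length / 2 := by linarith
        _ = (1/2:ℝ)^s.length * (1/2) := by ring
  have sub : ∀ (s : List ℕ) (n : ℕ), cB (n :: s) ⊆ cB s := fun s n =>
    (h2 s n).trans ball_subset_closedBall
  -- disjointness at each level
  have levelDisj : ∀ s t : List ℕ, s.length = t.length → s ≠ t → Disjoint (cB s) (cB t) := by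
    intro s
    induction s with
    | nil =>
      intro t hlen hne
      cases t with
      | nil => exact absurd rfl hne
      | cons b t' => simp at hlen
    | cons a s' ih =>
      intro t hlen hne
      cases t with
      | nil => simp at hlen
      | cons b t' =>
        simp only [List.length_cons, Nat.succ_inj] at hlen
        by_cases hst : s' = t'
        · subst hst
          have hab : a ≠ b := fun h => hne (by rw [h])
          exact h4 s' a b hab
        · exact ((ih t' hlen hst).mono (sub s' a) (sub t' b))
  -- level finiteness
  have levelFin : ∀ (K : Set X), IsCompact K → ∀ m : ℕ,
      {s : List ℕ | s.length = m ∧ (cB s ∩ K).Nonempty}.Finite := by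
    intro K hK m
    induction m with
    | zero =>
      refine Set.Finite.subset (Set.finite_singleton ([] : List ℕ)) ?_
      rintro s ⟨hs, -⟩
      simp [List.length_eq_zero_iff.mp hs]
    | succ m ih =>
      refine Set.Finite.subset ((ih.biUnion
        (fun t _ => ((h5 t K hK).image (fun n => n :: t))))) ?_
      rintro s ⟨hlen, hne⟩
      cases s with
      | nil => simp at hlen
      | cons a t =>
        simp only [List.length_cons, Nat.succ_inj] at hlen
        have ht : t ∈ {s : List ℕ | s.length = m ∧ (cB s ∩ K).Nonempty} :=
          ⟨hlen, hne.mono (Set.inter_subset_inter_left K (sub t a))⟩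
        exact Set.mem_biUnion ht ⟨a, hne, rfl⟩
  -- unions of same-level balls are closed
  have unionClosed : ∀ (m : ℕ) (S : Set (List ℕ)), (∀ s ∈ S, s.length = m) →
      IsClosed (⋃ s ∈ S, cB s) := by
    intro m S hS
    refine isClosed_of_closure_subset fun z hz => ?_
    obtain ⟨y, hyU, hyz⟩ := mem_closure_iff_seq_limit.mp hz
    have : ∀ j : ℕ, ∃ s, s ∈ S ∧ y j ∈ cB s := by
      intro j
      obtain ⟨s, hs, hys⟩ := Set.mem_iUnion₂.mp (hyU j)
      exact ⟨s, hs, hys⟩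
    choose σ hσS hσy using this
    have hKc : IsCompact (insert z (Set.range y)) := hyz.isCompact_insert_range
    have hσfin : (Set.range σ).Finite := by
      refine Set.Finite.subset (levelFin _ hKc m) ?_
      rintro s ⟨j, rfl⟩
      exact ⟨hS _ (hσS j), ⟨y j, hσy j, Set.mem_insert_of_mem _ (Set.mem_range_self j)⟩⟩
    obtain ⟨a, ha⟩ := exists_infinite_fiber_of_finite_range hσfin
    have hfreq : ∃ᶠ j in atTop, y j ∈ cB a := by
      have : ∃ᶠ j in atTop, σ j = a := Nat.frequently_atTop_iff_infinite.mpr ha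
      exact this.mono fun j hj => hj ▸ hσy j
    have hzmem : z ∈ cB a :=
      Metric.isClosed_closedBall.closure_subset (mem_closure_of_frequently_of_tendsto hfreq hyz)
    obtain ⟨j, hj⟩ := ha.nonempty
    exact Set.mem_biUnion (hj ▸ hσS j) hzmem
  -- the limit map
  have cauchy : ∀ σ : ℕ → ℕ, ∃ z : X, Tendsto (fun n => c (PiNat.res σ n)) atTop (𝓝 z) := by
    intro σ
    refine cauchySeq_tendsto_of_complete ?_
    refine cauchySeq_of_le_geometric (1/2 : ℝ) 1 (by norm_num) fun n => ?_
    have hmem : c (PiNat.res σ (n + 1)) ∈ cB (PiNat.res σ n) := by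
      have : c (PiNat.res σ (n+1)) ∈ cB (PiNat.res σ (n+1)) :=
        mem_closedBall_self (h1 _).le
      rw [PiNat.res_succ] at this ⊢
      exact sub _ _ this
    have : dist (c (PiNat.res σ n)) (c (PiNat.res σ (n+1))) ≤ r (PiNat.res σ n) := by
      rw [dist_comm]; exact mem_closedBall.mp hmem
    refine this.trans ?_
    have := rb (PiNat.res σ n)
    rw [PiNat.res_length] at this
    simpa using this
  choose f hf using cauchy
  have fmem : ∀ (σ : ℕ → ℕ) (m : ℕ), f σ ∈ cB (PiNat.res σ m) := by
    intro σ m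
    refine Metric.isClosed_closedBall.mem_of_tendsto (hf σ) ?_
    refine Filter.eventually_atTop.mpr ⟨m, fun n hn => ?_⟩
    -- c (res σ n) ∈ cB (res σ m) for n ≥ m
    clear hf
    induction n with
    | zero =>
      have : m = 0 := Nat.le_zero.mp hn
      subst this
      exact mem_closedBall_self (h1 _).le
    | succ n ihn =>
      rcases Nat.lt_or_ge m (n+1) with hmn | hmn
      · have hle : m ≤ n := Nat.lt_succ_iff.mp hmn
        have : c (PiNat.res σ (n+1)) ∈ cB (PiNat.res σ n) := by
          have hx : c (PiNat.res σ (n+1)) ∈ cB (PiNat.res σ (n+1)) :=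
            mem_closedBall_self (h1 _).le
          rw [PiNat.res_succ] at hx ⊢
          exact sub _ _ hx
        -- need cB (res σ n) ⊆ cB (res σ m)
        have hnest : ∀ k l : ℕ, k ≤ l → cB (PiNat.res σ l) ⊆ cB (PiNat.res σ k) := by
          intro k l hkl
          induction l with
          | zero => simp [Nat.le_zero.mp hkl]
          | succ l ihl =>
            rcases Nat.lt_or_ge k (l+1) with h' | h'
            · refine Set.Subset.trans ?_ (ihl (Nat.lt_succ_iff.mp h'))
              rw [PiNat.res_succ]
              exact sub _ _
            · have : k = l + 1 := le_antisymm hkl h'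
              subst this
              exact subset_rfl
        exact hnest m n hle this
      · have : m = n + 1 := le_antisymm hn hmn
        subst this
        exact mem_closedBall_self (h1 _).le
  -- distance bound from membership in a level ball
  have fdist : ∀ (σ : ℕ → ℕ) (m : ℕ) (z : X), z ∈ cB (PiNat.res σ m) →
      dist z (f σ) ≤ 2 * (1 / 2 : ℝ) ^ m := by
    intro σ m z hz
    have h1' := fmem σ m
    have hrb := rb (PiNat.res σ m)
    rw [PiNat.res_length] at hrb
    calc dist z (f σ) ≤ dist z (c (PiNat.res σ m)) + dist (f σ) (c (PiNat.res σ m)) :=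
          dist_triangle_right _ _ _
      _ ≤ r (PiNat.res σ m) + r (PiNat.res σ m) :=
          add_le_add (mem_closedBall.mp hz) (mem_closedBall.mp h1')
      _ ≤ 2 * (1 / 2 : ℝ) ^ m := by linarith
  -- injectivity
  have hfinj : Function.Injective f := by
    intro σ τ h
    by_contra hne
    have hex : ∃ n, σ n ≠ τ n := Function.ne_iff.mp hne
    have hd : σ (Nat.find hex) ≠ τ (Nat.find hex) := Nat.find_spec hex
    set n := Nat.find hex with hn
    have hmin : ∀ i, i < n → σ i = τ i := fun i hi => not_not.mp (Nat.find_min hex hi)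
    have hres : PiNat.res σ n = PiNat.res τ n := PiNat.res_eq_res.mpr hmin
    have h1' : f σ ∈ cB (σ n :: PiNat.res σ n) := by
      rw [← PiNat.res_succ]; exact fmem σ (n + 1)
    have h2' : f τ ∈ cB (τ n :: PiNat.res σ n) := by
      rw [hres, ← PiNat.res_succ]; exact fmem τ (n + 1)
    rw [← h] at h2'
    exact Set.disjoint_left.mp (h4 _ _ _ hd) h1' h2'
  -- continuity
  have hfc : Continuous f := by
    rw [continuous_iff_continuousAt]
    intro σ
    rw [ContinuousAt, Metric.tendsto_nhds]
    intro ε hε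
    obtain ⟨m, hm⟩ : ∃ m : ℕ, 2 * (1 / 2 : ℝ) ^ m < ε := by
      obtain ⟨m, hm⟩ := exists_pow_lt_of_lt_one (by positivity : (0:ℝ) < ε / 2)
        (by norm_num : (1:ℝ) / 2 < 1)
      exact ⟨m, by linarith⟩
    refine Filter.eventually_of_mem
      ((PiNat.isOpen_cylinder (fun _ : ℕ => ℕ) σ m).mem_nhds
        (PiNat.self_mem_cylinder σ m)) fun τ hτ => ?_
    have hres : PiNat.res τ m = PiNat.res σ m :=
      PiNat.res_eq_res.mpr fun i hi => PiNat.mem_cylinder_iff.mp hτ i hi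
    have hmem : f τ ∈ cB (PiNat.res σ m) := by rw [← hres]; exact fmem τ m
    calc dist (f τ) (f σ) ≤ 2 * (1 / 2 : ℝ) ^ m := fdist σ m _ hmem
      _ < ε := hm
  -- the range and its description
  set C := Set.range f with hC
  have hCeq : C = ⋂ m : ℕ, ⋃ s ∈ {s : List ℕ | s.length = m}, cB s := by
    apply Set.Subset.antisymm
    · rintro z ⟨τ, rfl⟩
      exact Set.mem_iInter.mpr fun m =>
        Set.mem_biUnion (by simp [PiNat.res_length]) (fmem τ m)
    · intro z hz
      rw [Set.mem_iInter] at hz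
      have hex : ∀ m : ℕ, ∃ s : List ℕ, s.length = m ∧ z ∈ cB s := by
        intro m
        obtain ⟨s, hs, hzs⟩ := Set.mem_iUnion₂.mp (hz m)
        exact ⟨s, hs, hzs⟩
      choose S hSlen hSz using hex
      have huniq : ∀ s t : List ℕ, s.length = t.length → z ∈ cB s → z ∈ cB t → s = t := by
        intro s t hlen hzs hzt
        by_contra hne
        exact Set.disjoint_left.mp (levelDisj s t hlen hne) hzs hzt
      have hcoh : ∀ m, S (m + 1) = (S (m + 1)).headI :: S m := by
        intro m
        cases hd : S (m + 1) with
        | nil => have := hSlen (m + 1); rw [hd] at this; simp at this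
        | cons a t =>
          have hlen : t.length = m := by
            have := hSlen (m + 1); rw [hd] at this; simpa using this
          have hzt : z ∈ cB t := by
            have := hSz (m + 1); rw [hd] at this; exact sub t a this
          have ht : t = S m := huniq t (S m) (by rw [hlen, hSlen m]) hzt (hSz m)
          rw [ht]; simp
      set σ : ℕ → ℕ := fun m => (S (m + 1)).headI with hσdef
      have hres : ∀ m, PiNat.res σ m = S m := by
        intro m
        induction m with
        | zero =>
          rw [PiNat.res_zero]
          symm
          exact List.length_eq_zero_iff.mp (hSlen 0)
        | succ m ih => rw [PiNat.res_succ, ih, ← hcoh m]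
      refine ⟨σ, ?_⟩
      have hb : ∀ m : ℕ, dist z (f σ) ≤ 2 * (1 / 2 : ℝ) ^ m := fun m =>
        fdist σ m z (by rw [hres]; exact hSz m)
      have h0 : dist z (f σ) ≤ 0 := by
        by_contra hpos
        push_neg at hpos
        obtain ⟨m, hm⟩ := exists_pow_lt_of_lt_one (by linarith : (0:ℝ) < dist z (f σ) / 2)
          (by norm_num : (1:ℝ) / 2 < 1)
        have := hb m
        linarith
      exact (dist_le_zero.mp h0).symm
  have hCclosed : IsClosed C := by
    rw [hCeq]
    exact isClosed_iInter fun m => unionClosed m _ fun s hs => hs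
  -- the homeomorphism
  set e : (ℕ → ℕ) ≃ C := Equiv.ofInjective f hfinj with he
  have hecont : Continuous (e : (ℕ → ℕ) → C) := Continuous.subtype_mk hfc _
  have hesymm : Continuous (e.symm : C → ℕ → ℕ) := by
    rw [(PiNat.isTopologicalBasis_cylinders (fun _ : ℕ => ℕ)).continuous_iff]
    rintro s ⟨x, n, rfl⟩
    have himg : ((e.symm : C → ℕ → ℕ) ⁻¹' PiNat.cylinder x n) =
        Subtype.val ⁻¹' (⋃ t ∈ {t : List ℕ | t.length = n ∧ t ≠ PiNat.res x n}, cB t)ᶜ := by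
      ext p
      simp only [Set.mem_preimage, Set.mem_compl_iff]
      have hpf : f (e.symm p) = (p : X) := Equiv.apply_ofInjective_symm hfinj p
      constructor
      · intro hp
        have hres : PiNat.res (e.symm p) n = PiNat.res x n :=
          PiNat.res_eq_res.mpr fun i hi => PiNat.mem_cylinder_iff.mp hp i hi
        intro hbad
        obtain ⟨t, htmem, hpt⟩ := Set.mem_iUnion₂.mp hbad
        have hp1 : (p : X) ∈ cB (PiNat.res x n) := by
          rw [← hpf, ← hres]; exact fmem _ n
        exact Set.disjoint_left.mp
          (levelDisj t (PiNat.res x n) (by simp [PiNat.res_length, htmem.1]) htmem.2)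
          hpt hp1
      · intro hbad
        have hp0 : (p : X) ∈ cB (PiNat.res (e.symm p) n) := by
          rw [← hpf]; exact fmem _ n
        have hres : PiNat.res (e.symm p) n = PiNat.res x n := by
          by_contra hne
          exact hbad (Set.mem_biUnion ⟨by simp [PiNat.res_length], hne⟩ hp0)
        rw [PiNat.mem_cylinder_iff]
        intro i hi
        exact PiNat.res_eq_res.mp hres hi
    rw [himg]
    refine IsOpen.preimage continuous_subtype_val ?_
    rw [isOpen_compl_iff]
    exact unionClosed n _ fun t ht => ht.1
  exact ⟨C, hCclosed, ⟨(Homeomorph.mk e hecont hesymm).symm⟩⟩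

end part5

section part6

variable {X : Type*} [MetricSpace X]

lemma isSigmaCompact_inter_compact {U K : Set X} (hU : IsOpen U) (hK : IsCompact K) :
    IsSigmaCompact (U ∩ K) := by
  obtain ⟨F, hFc, hFu⟩ := isFsigma_open hU
  have : U ∩ K = ⋃ n, F n ∩ K := by rw [← Set.iUnion_inter, hFu]
  rw [this]
  exact isSigmaCompact_iUnion_of_isCompact _ fun n => hK.inter_left (hFc n)

theorem hurewicz_aux [CompleteSpace X] [SecondCountableTopology X]
    (h : ¬ ∃ K : ℕ → Set X, (∀ n, IsCompact (K n)) ∧ ⋃ n, K n = Set.univ) :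
    ∃ C : Set X, IsClosed C ∧ Nonempty (C ≃ₜ (ℕ → ℕ)) := by
  classical
  have hnotσ : ¬ IsSigmaCompact (Set.univ : Set X) := h
  set S : Set (Set X) := {U : Set X | IsOpen U ∧ IsSigmaCompact U} with hSdef
  set V : Set X := ⋃₀ S with hVdef
  have hVopen : IsOpen V := isOpen_sUnion fun U hU => hU.1
  have hVσ : IsSigmaCompact V := by
    obtain ⟨T, hTc, hTsub, hTu⟩ := isOpen_sUnion_countable S fun U hU => hU.1
    rw [hVdef, ← hTu]
    exact isSigmaCompact_sUnion T hTc fun s => (hTsub s.2).2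
  set W : Set X := Vᶜ with hWdef
  have hWc : IsClosed W := hVopen.isClosed_compl
  have hP : ∀ U, IsOpen U → (U ∩ W).Nonempty → ¬ IsSigmaCompact (U ∩ W) := by
    rintro U hU ⟨x, hxU, hxW⟩ hσ
    obtain ⟨K, hKc, hKu⟩ := hVσ
    have hUV : IsSigmaCompact (U ∩ V) := by
      have : U ∩ V = ⋃ n, U ∩ K n := by rw [← Set.inter_iUnion, hKu]
      rw [this]
      exact isSigmaCompact_iUnion _ fun n => isSigmaCompact_inter_compact hU (hKc n)
    have hUσ : IsSigmaCompact U := by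
      have hsplit : U = ⋃ b : Bool, if b then U ∩ V else U ∩ W := by
        ext y
        simp only [Set.mem_iUnion, Bool.exists_bool, if_true, if_false]
        constructor
        · intro hy
          by_cases hyV : y ∈ V
          · exact Or.inr ⟨hy, hyV⟩
          · exact Or.inl ⟨hy, hyV⟩
        · rintro (⟨hy, -⟩ | ⟨hy, -⟩) <;> exact hy
      rw [hsplit]
      refine isSigmaCompact_iUnion _ fun b => ?_
      cases b
      · simpa using hσ
      · simpa using hUV
    have : U ∈ S := ⟨hU, hUσ⟩
    exact hxW (Set.mem_sUnion.mpr ⟨U, this, hxU⟩)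
  have hWne : W.Nonempty := by
    rcases Set.eq_empty_or_nonempty W with hemp | hne
    · exfalso
      have : V = Set.univ := by
        rw [hWdef] at hemp
        simpa [Set.compl_empty_iff] using hemp
      exact hnotσ (this ▸ hVσ)
    · exact hne
  obtain ⟨w0, hw0⟩ := hWne
  have hp0 : ((w0, (1:ℝ)) : X × ℝ).1 ∈ W ∧ (0:ℝ) < ((w0, (1:ℝ)) : X × ℝ).2 :=
    ⟨hw0, one_pos⟩
  set c : List ℕ → X := fun s => (scheme W hP hWc (w0, 1) s).1 with hc
  set r : List ℕ → ℝ := fun s => (scheme W hP hWc (w0, 1) s).2 with hrr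
  have hgood := fun s => scheme_good hP hWc hp0 s
  refine scheme_to_baire c r (fun s => (scheme_mem hP hWc hp0 s).2)
    (fun s n => ?_) (fun s n => ?_) (fun s m n hmn => ?_) (fun s K hK => ?_) ?_
  · exact (hgood s).2.2.2.1 n
  · exact (hgood s).2.2.1 n
  · exact (hgood s).2.2.2.2.1 m n hmn
  · exact (hgood s).2.2.2.2.2 K hK
  · exact le_refl 1

end part6

section part7

lemma baire_not_sigmaCompact : ¬ IsSigmaCompact (Set.univ : Set (ℕ → ℕ)) := by
  letI := upgradeIsCompletelyMetrizable (ℕ → ℕ)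
  rintro ⟨K, hKc, hKu⟩
  obtain ⟨n, hn⟩ := nonempty_interior_of_iUnion_of_closed
    (fun n => (hKc n).isClosed) hKu
  obtain ⟨x, hx⟩ := hn
  obtain ⟨I, u, hIu, hIsub⟩ := isOpen_pi_iff.mp isOpen_interior x hx
  set N : ℕ := (I.sup id) + 1 with hN
  have hNI : N ∉ I := by
    intro hNmem
    have : N ≤ I.sup id := Finset.le_sup (f := id) hNmem
    omega
  have hval : ∀ j : ℕ, Function.update x N j ∈ K n := by
    intro j
    refine interior_subset (hIsub ?_)
    intro i hi
    have hiN : i ≠ N := fun hiN => hNI (hiN ▸ hi)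
    rw [Function.update_of_ne hiN]
    exact (hIu i hi).2
  have himg : ((fun y : ℕ → ℕ => y N) '' K n).Finite := by
    have : IsCompact ((fun y : ℕ → ℕ => y N) '' K n) :=
      (hKc n).image (continuous_apply N)
    exact this.finite_of_discrete
  have : (Set.univ : Set ℕ) ⊆ (fun y : ℕ → ℕ => y N) '' K n := by
    intro j _
    refine ⟨Function.update x N j, hval j, ?_⟩
    simp
  exact Set.infinite_univ (himg.subset this)

end part7

/-- Hurewicz: a Polish space is Kσ (a countable union of compact sets) iff it
contains no closed subset homeomorphic to Baire space. -/
theorem polish_ksigma_iff_no_closed_baire (X : Type*) [TopologicalSpace X]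
    [PolishSpace X] :
    (∃ K : ℕ → Set X, (∀ n, IsCompact (K n)) ∧ ⋃ n, K n = Set.univ) ↔
    ¬ ∃ C : Set X, IsClosed C ∧ Nonempty (C ≃ₜ (ℕ → ℕ)) := by
  constructor
  · rintro hK ⟨C, hCc, ⟨e⟩⟩
    have huniv : IsSigmaCompact (Set.univ : Set X) := hK
    have hCσ : IsSigmaCompact C := huniv.of_isClosed_subset hCc (Set.subset_univ C)
    have hCuniv : IsSigmaCompact (Set.univ : Set C) :=
      isSigmaCompact_iff_isSigmaCompact_univ.mp hCσ
    have hBσ : IsSigmaCompact (Set.univ : Set (ℕ → ℕ)) := by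
      have himg := hCuniv.image e.continuous
      rwa [Set.image_univ, e.surjective.range_eq] at himg
    exact baire_not_sigmaCompact hBσ
  · intro hno
    by_contra hK
    letI := upgradeIsCompletelyMetrizable X
    exact hno (hurewicz_aux hK)
end

section
/- If f : X → Y is a pointwise limit of continuous functions between metric spaces (f is Baire class 1), then the preimage of every open set under f is an Fσ set. -/
/-- If `f : X → Y` between metric spaces is a pointwise limit of continuous
functions (Baire class 1), then the preimage of every open set under `f` is an
Fσ set (a countable union of closed sets). -/
theorem baire_class_one_preimage_open_fsigma {X Y : Type*} [MetricSpace X]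
    [MetricSpace Y] (f : ℕ → X → Y) (g : X → Y) (hf : ∀ n, Continuous (f n))
    (hconv : ∀ x, Filter.Tendsto (fun n => f n x) Filter.atTop (nhds (g x)))
    (U : Set Y) (hU : IsOpen U) :
    ∃ F : ℕ → Set X, (∀ n, IsClosed (F n)) ∧ g ⁻¹' U = ⋃ n, F n := by
  -- threshold sets
  set C : ℕ → Set Y := fun k => {y | ((k : ENNReal))⁻¹ ≤ EMetric.infEdist y Uᶜ} with hC
  have hCclosed : ∀ k, IsClosed (C k) := fun k =>
    isClosed_le continuous_const EMetric.continuous_infEdist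
  set G : ℕ × ℕ → Set X := fun p => ⋂ m, ⋂ (_ : p.2 ≤ m), (f m) ⁻¹' C p.1 with hG
  have hGclosed : ∀ p, IsClosed (G p) := fun p =>
    isClosed_iInter fun m => isClosed_iInter fun _ => (hCclosed p.1).preimage (hf m)
  let e := Denumerable.eqv (ℕ × ℕ)
  refine ⟨fun n => G (e.symm n), fun n => hGclosed _, ?_⟩
  ext x
  simp only [Set.mem_preimage, Set.mem_iUnion]
  constructor
  · intro hx
    have hne : EMetric.infEdist (g x) Uᶜ ≠ 0 := by
      intro h0
      have : g x ∈ closure Uᶜ := EMetric.mem_closure_iff_infEdist_zero.2 h0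
      rw [hU.isClosed_compl.closure_eq] at this
      exact this hx
    obtain ⟨k, hk⟩ := ENNReal.exists_inv_nat_lt hne
    have hopen : IsOpen {y | ((k : ENNReal))⁻¹ < EMetric.infEdist y Uᶜ} :=
      isOpen_lt continuous_const EMetric.continuous_infEdist
    have hev : ∀ᶠ m in Filter.atTop, f m x ∈ {y | ((k : ENNReal))⁻¹ < EMetric.infEdist y Uᶜ} :=
      (hconv x).eventually (hopen.mem_nhds hk)
    obtain ⟨N, hN⟩ := hev.exists_forall_of_atTop
    refine ⟨e (k, N), ?_⟩
    rw [Equiv.symm_apply_apply]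
    simp only [hG, hC, Set.mem_iInter, Set.mem_preimage, Set.mem_setOf_eq]
    exact fun m hm => (hN m hm).le
  · rintro ⟨n, hn⟩
    set p := e.symm n with hp
    simp only [hG, Set.mem_iInter, Set.mem_preimage] at hn
    have hlim : Filter.Tendsto (fun m => EMetric.infEdist (f m x) Uᶜ) Filter.atTop
        (nhds (EMetric.infEdist (g x) Uᶜ)) :=
      (EMetric.continuous_infEdist.tendsto _).comp (hconv x)
    have hle : ((p.1 : ENNReal))⁻¹ ≤ EMetric.infEdist (g x) Uᶜ :=
      ge_of_tendsto hlim (Filter.eventually_atTop.2 ⟨p.2, fun m hm => hn m hm⟩)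
    have hne : EMetric.infEdist (g x) Uᶜ ≠ 0 := by
      intro h0
      rw [h0] at hle
      exact (ENNReal.inv_ne_zero.2 (ENNReal.natCast_ne_top p.1)) (le_antisymm hle bot_le ▸ rfl)
    by_contra hx
    have : g x ∈ closure Uᶜ := subset_closure hx
    exact hne (EMetric.infEdist_zero_of_mem (hU.isClosed_compl.closure_eq ▸ this))
end
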